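/- Let m ≥ 2 with m - 1 prime or a 2-pseudoprime. Then gcd((2^{m-1} - 1)^2, 2^{2^m+1} - 1) equals 2^5 - 1 = 31 if m - 1 ≡ 5 (mod 20), and equals 1 otherwise. -/

import Mathlib

private lemma pow_mod_period (a p q k : ℕ) (h : a ^ p ≡ 1 [MOD q]) :
    a ^ k ≡ a ^ (k % p) [MOD q] := by
  conv_lhs => rw [← Nat.div_add_mod k p, pow_add, pow_mul]
  calc (a ^ p) ^ (k / p) * a ^ (k % p)
      ≡ 1 ^ (k / p) * a ^ (k % p) [MOD q] := Nat.ModEq.mul_right _ (h.pow _)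
    _ = a ^ (k % p) := by rw [one_pow, one_mul]

private lemma dvd_two_pow_sub_one {d k : ℕ} (h : d ∣ k) : 2 ^ d - 1 ∣ 2 ^ k - 1 := by
  obtain ⟨t, rfl⟩ := h
  rw [pow_mul]
  simpa using Nat.sub_dvd_pow_sub_pow (2 ^ d) 1 t

private lemma two_pow_modEq (a b : ℕ) :
    2 ^ (b % a) - 1 ≡ 2 ^ b - 1 [MOD 2 ^ a - 1] := by
  have hle : (2:ℕ) ^ (b % a) ≤ 2 ^ b := Nat.pow_le_pow_right (by norm_num) (Nat.mod_le b a)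
  have h1 : (1:ℕ) ≤ 2 ^ (b % a) := Nat.one_le_two_pow
  rw [Nat.modEq_iff_dvd' (by omega)]
  have h2 : 2 ^ b - 1 - (2 ^ (b % a) - 1) = 2 ^ (b % a) * (2 ^ (b - b % a) - 1) := by
    rw [Nat.mul_sub, mul_one, ← pow_add, Nat.add_sub_cancel' (Nat.mod_le b a)]
    omega
  rw [h2]
  refine Dvd.dvd.mul_left ?_ _
  have hd : a * (b / a) + b % a = b := Nat.div_add_mod b a
  exact dvd_two_pow_sub_one ⟨b / a, by omega⟩

private lemma gcd_two_pow_sub_one (a b : ℕ) :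
    Nat.gcd (2 ^ a - 1) (2 ^ b - 1) = 2 ^ Nat.gcd a b - 1 := by
  induction a using Nat.strong_induction_on generalizing b with
  | _ a ih =>
    rcases Nat.eq_zero_or_pos a with rfl | ha
    · simp
    · rw [Nat.gcd_comm (2 ^ a - 1), ← (two_pow_modEq a b).gcd_eq,
        ih (b % a) (Nat.mod_lt _ ha) a, Nat.gcd_rec a b]

private lemma zmod961 (t : ℕ) : (32 : ZMod 961) ^ t = 1 + 31 * t := by
  induction t with
  | zero => simp
  | succ t ihh =>
    rw [pow_succ, ihh]
    push_cast
    have h992 : (992 : ZMod 961) = 31 := by decide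
    ring_nf
    rw [h992]

theorem gcd_value_pseudoprime (m : ℕ) (hm : 2 ≤ m)
    (h : Nat.Prime (m - 1) ∨
      (1 < m - 1 ∧ ¬ Nat.Prime (m - 1) ∧ 2 ^ (m - 2) ≡ 1 [MOD m - 1])) :
    Nat.gcd ((2 ^ (m - 1) - 1) ^ 2) (2 ^ (2 ^ m + 1) - 1) =
      if (m - 1) % 20 = 5 then 2 ^ 5 - 1 else 1 := by
  obtain ⟨n, rfl⟩ : ∃ n, m = n + 1 := ⟨m - 1, by omega⟩
  simp only [Nat.add_sub_cancel] at h ⊢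
  have he : n + 1 - 2 = n - 1 := by omega
  rw [he] at h
  rcases eq_or_ne n 2 with rfl | hn2
  · norm_num
  have hn1 : 1 < n := by rcases h with hp | ⟨h1, _, _⟩; exacts [hp.one_lt, h1]
  -- 2^(n-1) ≡ 1 mod n
  have hmod : 2 ^ (n - 1) ≡ 1 [MOD n] := by
    rcases h with hp | ⟨_, _, hpse⟩
    · have hodd : Odd n := hp.odd_of_ne_two hn2
      have hco : Nat.Coprime 2 n := by
        refine (Nat.prime_two.coprime_iff_not_dvd).mpr ?_
        have := Nat.odd_iff.mp hodd
        omega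
      have := Nat.ModEq.pow_totient hco
      rwa [Nat.totient_prime hp] at this
    · exact hpse
  have h1le : (1:ℕ) ≤ 2 ^ (n - 1) := Nat.one_le_two_pow
  have hdvd : n ∣ 2 ^ (n - 1) - 1 := (Nat.modEq_iff_dvd' h1le).mp hmod.symm
  set B := 2 ^ (n + 1) + 1 with hB
  -- gcd n B = gcd n 5
  have h4le : (4:ℕ) ≤ 2 ^ (n + 1) := by
    calc (4:ℕ) = 2 ^ 2 := by norm_num
    _ ≤ 2 ^ (n + 1) := Nat.pow_le_pow_right (by norm_num) (by omega)
  have h2pow : 2 ^ (n + 1) = 4 * 2 ^ (n - 1) := by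
    rw [show n + 1 = 2 + (n - 1) by omega, pow_add]; norm_num
  have hBmod : Nat.gcd n B = Nat.gcd n 5 := by
    have key : 5 ≡ B [MOD n] := by
      rw [Nat.modEq_iff_dvd' (by omega)]
      have heq : B - 5 = 4 * (2 ^ (n - 1) - 1) := by rw [hB, h2pow]; omega
      rw [heq]
      exact Dvd.dvd.mul_left hdvd 4
    have := key.gcd_eq
    rw [Nat.gcd_comm n B, Nat.gcd_comm n 5]
    exact this.symm
  have hgcd1 : Nat.gcd (2 ^ n - 1) (2 ^ B - 1) = 2 ^ Nat.gcd n B - 1 :=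
    gcd_two_pow_sub_one n B
  by_cases h5 : n % 20 = 5
  · rw [if_pos h5]
    have h5n : 5 ∣ n := by omega
    -- 5 ∣ B
    have h5B : 5 ∣ B := by
      have hc := pow_mod_period 2 4 5 (n + 1) (by decide)
      rw [show (n + 1) % 4 = 2 by omega] at hc
      have : B ≡ 2 ^ 2 + 1 [MOD 5] := hc.add_right 1
      exact (Nat.modEq_zero_iff_dvd).mp (this.trans (by decide))
    have hgnB : Nat.gcd n B = 5 := by
      rw [hBmod]; exact Nat.gcd_eq_right h5n
    rw [hgnB] at hgcd1
    -- 31 ∤ B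
    have h31B : ¬ (31 ∣ B) := by
      intro hcon
      have hc := pow_mod_period 2 5 31 (n + 1) (by decide)
      have hBc : B ≡ 2 ^ ((n + 1) % 5) + 1 [MOD 31] := hc.add_right 1
      have h0 : 2 ^ ((n + 1) % 5) + 1 ≡ 0 [MOD 31] :=
        hBc.symm.trans ((Nat.modEq_zero_iff_dvd).mpr hcon)
      have hr : (n + 1) % 5 < 5 := Nat.mod_lt _ (by norm_num)
      set r := (n + 1) % 5 with hrdef
      interval_cases r <;> exact absurd h0 (by decide)
    -- ¬ 31^2 ∣ 2^B - 1
    obtain ⟨t, ht⟩ := h5B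
    have h31t : ¬ (31 ∣ t) := fun hc => h31B (by rw [ht]; exact Dvd.dvd.mul_left hc 5)
    have hnot : ¬ ((31:ℕ) ^ 2 ∣ 2 ^ B - 1) := by
      intro hcon
      have h1leB : (1:ℕ) ≤ 2 ^ B := Nat.one_le_two_pow
      have hme : 1 ≡ 2 ^ B [MOD 961] := (Nat.modEq_iff_dvd' h1leB).mpr (by norm_num at hcon ⊢; exact hcon)
      have hz : ((2 ^ B : ℕ) : ZMod 961) = ((1 : ℕ) : ZMod 961) :=
        (ZMod.natCast_eq_natCast_iff _ _ _).mpr hme.symm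
      rw [ht, pow_mul] at hz
      push_cast at hz
      rw [zmod961 t] at hz
      have hz2 : ((31 * t : ℕ) : ZMod 961) = 0 := by push_cast; linear_combination hz
      have : (961:ℕ) ∣ 31 * t := (ZMod.natCast_eq_zero_iff _ _).mp hz2
      have : 31 ∣ t := by
        have h31 : 31 * 31 ∣ 31 * t := by norm_num at this ⊢; exact this
        exact (mul_dvd_mul_iff_left (by norm_num : (31:ℕ) ≠ 0)).mp h31
      exact h31t this
    -- conclude
    have hG2 : Nat.gcd ((2 ^ n - 1) ^ 2) (2 ^ B - 1) ∣ (31:ℕ) ^ 2 := by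
      have hd : Nat.gcd ((2 ^ n - 1) ^ 2) (2 ^ B - 1) ∣
          Nat.gcd (2 ^ n - 1) (2 ^ B - 1) ^ 2 := gcd_pow_left_dvd_pow_gcd
      rwa [hgcd1, show (2:ℕ)^5 - 1 = 31 by norm_num] at hd
    have h31G : 31 ∣ Nat.gcd ((2 ^ n - 1) ^ 2) (2 ^ B - 1) := by
      refine Nat.dvd_gcd (Dvd.dvd.trans ?_ (dvd_pow_self _ (by norm_num))) ?_
      · have := dvd_two_pow_sub_one h5n; norm_num at this; exact this
      · have h5B' : (5:ℕ) ∣ B := ⟨t, ht⟩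
        have := dvd_two_pow_sub_one h5B'
        norm_num at this; exact this
    have hGB : Nat.gcd ((2 ^ n - 1) ^ 2) (2 ^ B - 1) ∣ 2 ^ B - 1 := Nat.gcd_dvd_right _ _
    obtain ⟨k, hk2, hGk⟩ := (Nat.dvd_prime_pow (by norm_num : Nat.Prime 31)).mp hG2
    interval_cases k
    · rw [hGk] at h31G; norm_num at h31G
    · rw [hGk]; norm_num
    · rw [hGk] at hGB; exact absurd hGB hnot
  · rw [if_neg h5]
    have h5n : ¬ (5 ∣ n) := by
      intro hd5
      have h51 : 2 ^ (n - 1) ≡ 1 [MOD 5] :=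
        ((Nat.modEq_iff_dvd' h1le).mpr (dvd_trans hd5 hdvd)).symm
      have hc := pow_mod_period 2 4 5 (n - 1) (by decide)
      have hr1 : 2 ^ ((n - 1) % 4) ≡ 1 [MOD 5] := hc.symm.trans h51
      have hr : (n - 1) % 4 < 4 := Nat.mod_lt _ (by norm_num)
      have hr0 : (n - 1) % 4 = 0 := by
        set r := (n - 1) % 4 with hrdef
        interval_cases r
        · rfl
        all_goals exact absurd hr1 (by decide)
      omega
    have hg5 : Nat.gcd n 5 = 1 := by
      rcases (Nat.prime_five).eq_one_or_self_of_dvd _ (Nat.gcd_dvd_right n 5) with h1 | h1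
      · exact h1
      · exact absurd (h1 ▸ Nat.gcd_dvd_left n 5) h5n
    rw [hBmod, hg5] at hgcd1
    rw [show (2:ℕ) ^ 1 - 1 = 1 by norm_num] at hgcd1
    exact Nat.Coprime.pow_left 2 hgcd1
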